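/- Minimizing the normalized hypergraph cut NH-cut(𝒱₁,…,𝒱ₖ) = Σ_{j=1}^k vol(∂𝒱_j)/vol(𝒱_j) over k-way partitions 𝒱₁,…,𝒱ₖ of the vertex set 𝒱 of a hypergraph is equivalent to minimizing Trace(X̂ᵀ L X̂) over the same partitions, where L = I − D^{-1/2} H Δ^{-1} Hᵀ D^{-1/2} is the normalized hypergraph Laplacian and X̂ ∈ ℝ^{|𝒱|×k} is defined by X̂_{vj} = √(deg(v)/vol(𝒱_j)) · 1{v ∈ 𝒱_j} (which satisfies X̂ᵀX̂ = I). That is, for every partition, NH-cut(𝒱₁,…,𝒱ₖ) = Trace(X̂ᵀ L X̂), so the two minimization problems have the same minimizers. -/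

import Mathlib

open Finset Matrix

noncomputable section

variable {n k : ℕ}

/-- Degree of a node `v` in the hypergraph with edge set `E`:
`deg(v) = ∑_{e ∈ E} H_{ve}`. -/
def degH (E : Finset (Finset (Fin n))) (v : Fin n) : ℝ :=
  ∑ e ∈ E, if v ∈ e then 1 else 0

/-- Volume of a set of nodes: `vol(S) = ∑_{v ∈ S} deg(v)`. -/
def volH (E : Finset (Finset (Fin n))) (S : Finset (Fin n)) : ℝ :=
  ∑ v ∈ S, degH E v

/-- The `j`-th class of the partition `ψ`. -/
def cls (ψ : Fin n → Fin k) (j : Fin k) : Finset (Fin n) :=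
  Finset.univ.filter fun v => ψ v = j

/-- Volume of the boundary of `S`:
`vol(∂S) = ∑_{e ∈ ∂S} |e ∩ S| |e ∩ Sᶜ| / |e|` (edges not in `∂S` contribute `0`). -/
def boundaryVol (E : Finset (Finset (Fin n))) (S : Finset (Fin n)) : ℝ :=
  ∑ e ∈ E, ((e ∩ S).card : ℝ) * ((e.card : ℝ) - ((e ∩ S).card : ℝ)) / (e.card : ℝ)

/-- The normalized hypergraph cut `NH-cut(𝒱₁,…,𝒱ₖ) = ∑_j vol(∂𝒱_j)/vol(𝒱_j)`. -/
def NHcut (E : Finset (Finset (Fin n))) (ψ : Fin n → Fin k) : ℝ :=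
  ∑ j : Fin k, boundaryVol E (cls ψ j) / volH E (cls ψ j)

/-- The matrix `H Δ⁻¹ Hᵀ`, with entries `∑_{e ∈ E} H_{ue} H_{ve} / |e|`. -/
def hAdj (E : Finset (Finset (Fin n))) : Matrix (Fin n) (Fin n) ℝ :=
  Matrix.of fun u v =>
    ∑ e ∈ E, ((if u ∈ e then (1 : ℝ) else 0) * (if v ∈ e then (1 : ℝ) else 0)) / (e.card : ℝ)

/-- The diagonal matrix `D^{-1/2}`. -/
def dInvSqrt (E : Finset (Finset (Fin n))) : Matrix (Fin n) (Fin n) ℝ :=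
  Matrix.diagonal fun v => (Real.sqrt (degH E v))⁻¹

/-- The normalized hypergraph Laplacian `L = I - D^{-1/2} H Δ⁻¹ Hᵀ D^{-1/2}`. -/
def hLap (E : Finset (Finset (Fin n))) : Matrix (Fin n) (Fin n) ℝ :=
  1 - dInvSqrt E * hAdj E * dInvSqrt E

/-- The matrix `X̂` with `X̂_{vj} = √(deg(v)/vol(𝒱_j)) 1{v ∈ 𝒱_j}`. -/
def Xhat (E : Finset (Finset (Fin n))) (ψ : Fin n → Fin k) : Matrix (Fin n) (Fin k) ℝ :=
  Matrix.of fun v j => if ψ v = j then Real.sqrt (degH E v / volH E (cls ψ j)) else 0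

lemma sum_ind_card (e S : Finset (Fin n)) :
    ∑ v ∈ S, (if v ∈ e then (1:ℝ) else 0) = ((e ∩ S).card : ℝ) := by
  rw [Finset.sum_boole, Finset.filter_mem_eq_inter]
  simp [Finset.inter_comm]

lemma volH_eq_edge (E : Finset (Finset (Fin n))) (S : Finset (Fin n)) :
    volH E S = ∑ e ∈ E, ((e ∩ S).card : ℝ) := by
  unfold volH degH
  rw [Finset.sum_comm]
  exact Finset.sum_congr rfl fun e _ => sum_ind_card e S

lemma vol_cls_pos (E : Finset (Finset (Fin n))) (hdeg : ∀ v : Fin n, 0 < degH E v)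
    {ψ : Fin n → Fin k} (hψ : Function.Surjective ψ) (j : Fin k) :
    0 < volH E (cls ψ j) := by
  obtain ⟨v, hv⟩ := hψ j
  exact Finset.sum_pos' (fun i _ => (hdeg i).le) ⟨v, by simp [cls, hv], hdeg v⟩

lemma boundary_div (E : Finset (Finset (Fin n))) (hE : ∀ e ∈ E, 2 ≤ e.card)
    (S : Finset (Fin n)) (hvol : 0 < volH E S) :
    boundaryVol E S / volH E S
      = 1 - (∑ e ∈ E, ((e ∩ S).card : ℝ)^2 / (e.card : ℝ)) / volH E S := by
  have hb : boundaryVol E S = volH E S - ∑ e ∈ E, ((e ∩ S).card : ℝ)^2 / (e.card : ℝ) := by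
    rw [volH_eq_edge, boundaryVol, ← Finset.sum_sub_distrib]
    refine Finset.sum_congr rfl fun e he => ?_
    have hm : (e.card : ℝ) ≠ 0 := by
      have := hE e he; positivity
    field_simp
  rw [hb, sub_div, div_self hvol.ne']

lemma key_trace (a V A b : ℝ) (ha : 0 < a) (hV : 0 < V) (hb : 0 < b) :
    Real.sqrt (a / V) * ((Real.sqrt a)⁻¹ * A * (Real.sqrt b)⁻¹) * Real.sqrt (b / V) = A / V := by
  rw [Real.sqrt_div ha.le, Real.sqrt_div hb.le]
  have hsa := Real.sqrt_pos.mpr ha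
  have hsb := Real.sqrt_pos.mpr hb
  have hsV := Real.sqrt_pos.mpr hV
  have hVV : Real.sqrt V * Real.sqrt V = V := Real.mul_self_sqrt hV.le
  field_simp
  rw [sq, hVV]
  ring

lemma adj_sum (E : Finset (Finset (Fin n))) (S : Finset (Fin n)) :
    ∑ v ∈ S, ∑ u ∈ S, hAdj E u v = ∑ e ∈ E, ((e ∩ S).card : ℝ)^2 / (e.card : ℝ) := by
  unfold hAdj
  simp only [Matrix.of_apply]
  rw [show (∑ v ∈ S, ∑ u ∈ S, ∑ e ∈ E,
        ((if u ∈ e then (1:ℝ) else 0) * (if v ∈ e then (1:ℝ) else 0)) / (e.card : ℝ))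
      = ∑ e ∈ E, ∑ v ∈ S, ∑ u ∈ S,
        ((if u ∈ e then (1:ℝ) else 0) * (if v ∈ e then (1:ℝ) else 0)) / (e.card : ℝ) by
    calc (∑ v ∈ S, ∑ u ∈ S, ∑ e ∈ E,
          ((if u ∈ e then (1:ℝ) else 0) * (if v ∈ e then (1:ℝ) else 0)) / (e.card : ℝ))
        = ∑ v ∈ S, ∑ e ∈ E, ∑ u ∈ S,
          ((if u ∈ e then (1:ℝ) else 0) * (if v ∈ e then (1:ℝ) else 0)) / (e.card : ℝ) :=
          Finset.sum_congr rfl fun v _ => Finset.sum_comm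
      _ = ∑ e ∈ E, ∑ v ∈ S, ∑ u ∈ S,
          ((if u ∈ e then (1:ℝ) else 0) * (if v ∈ e then (1:ℝ) else 0)) / (e.card : ℝ) :=
          Finset.sum_comm]
  refine Finset.sum_congr rfl fun e he => ?_
  have h1 : ∀ v ∈ S, (∑ u ∈ S,
      ((if u ∈ e then (1:ℝ) else 0) * (if v ∈ e then (1:ℝ) else 0)) / (e.card : ℝ))
      = ((e ∩ S).card : ℝ) * ((if v ∈ e then (1:ℝ) else 0) / (e.card : ℝ)) := by
    intro v _
    rw [← Finset.sum_div, ← Finset.sum_mul, sum_ind_card, mul_div_assoc]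
  rw [Finset.sum_congr rfl h1, ← Finset.mul_sum, ← Finset.sum_div, sum_ind_card]
  ring

lemma quad_form (X : Matrix (Fin n) (Fin k) ℝ) (M : Matrix (Fin n) (Fin n) ℝ) (j : Fin k) :
    (Xᵀ * M * X) j j = ∑ v : Fin n, ∑ u : Fin n, X u j * M u v * X v j := by
  simp only [Matrix.mul_apply, Matrix.transpose_apply, Finset.sum_mul]

lemma diag_eq (E : Finset (Finset (Fin n))) (hdeg : ∀ v : Fin n, 0 < degH E v)
    {ψ : Fin n → Fin k} (hψ : Function.Surjective ψ) (j : Fin k) :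
    ((Xhat E ψ)ᵀ * (dInvSqrt E * hAdj E * dInvSqrt E) * Xhat E ψ) j j
      = (∑ e ∈ E, ((e ∩ cls ψ j).card : ℝ)^2 / (e.card : ℝ)) / volH E (cls ψ j) := by
  have hV := vol_cls_pos E hdeg hψ j
  have hM : ∀ u v, (dInvSqrt E * hAdj E * dInvSqrt E) u v
      = (Real.sqrt (degH E u))⁻¹ * hAdj E u v * (Real.sqrt (degH E v))⁻¹ := by
    intro u v
    simp [dInvSqrt, Matrix.mul_diagonal, Matrix.diagonal_mul, mul_comm, mul_assoc, mul_left_comm]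
  rw [quad_form]
  simp only [hM]
  have step2 : ∀ v u, Xhat E ψ u j
        * ((Real.sqrt (degH E u))⁻¹ * hAdj E u v * (Real.sqrt (degH E v))⁻¹) * Xhat E ψ v j
      = if ψ v = j then (if ψ u = j then hAdj E u v / volH E (cls ψ j) else 0) else 0 := by
    intro v u
    by_cases hu : ψ u = j <;> by_cases hv : ψ v = j <;>
      simp only [Xhat, Matrix.of_apply, hu, hv, if_true, if_false, zero_mul, mul_zero]
    exact key_trace _ _ _ _ (hdeg u) hV (hdeg v)
  rw [Finset.sum_congr rfl fun v _ => Finset.sum_congr rfl fun u _ => step2 v u]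
  have h2 : (∑ v ∈ cls ψ j, ∑ u ∈ cls ψ j, hAdj E u v / volH E (cls ψ j))
      = ∑ v : Fin n, ∑ u : Fin n,
          (if ψ v = j then (if ψ u = j then hAdj E u v / volH E (cls ψ j) else 0) else 0) := by
    rw [cls, Finset.sum_filter]
    refine Finset.sum_congr rfl fun v _ => ?_
    by_cases h : ψ v = j <;> simp [h, Finset.sum_filter]
  rw [← h2]
  simp only [← Finset.sum_div]
  rw [adj_sum]

theorem nhcut_eq_trace
    (E : Finset (Finset (Fin n))) (hE : ∀ e ∈ E, 2 ≤ e.card)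
    (hdeg : ∀ v : Fin n, 0 < degH E v)
    (ψ : Fin n → Fin k) (hψ : Function.Surjective ψ) :
    (Xhat E ψ)ᵀ * Xhat E ψ = 1 ∧
    NHcut E ψ = Matrix.trace ((Xhat E ψ)ᵀ * hLap E * Xhat E ψ) := by
  have hV : ∀ j, 0 < volH E (cls ψ j) := vol_cls_pos E hdeg hψ
  have hXX : (Xhat E ψ)ᵀ * Xhat E ψ = 1 := by
    ext i j
    simp only [Matrix.mul_apply, Matrix.transpose_apply, Xhat, Matrix.of_apply]
    by_cases hij : i = j
    · subst hij
      have hterm : ∀ v : Fin n,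
          (if ψ v = i then Real.sqrt (degH E v / volH E (cls ψ i)) else 0) *
          (if ψ v = i then Real.sqrt (degH E v / volH E (cls ψ i)) else 0)
          = if ψ v = i then degH E v / volH E (cls ψ i) else 0 := by
        intro v
        by_cases h : ψ v = i <;>
          simp [h, Real.mul_self_sqrt (div_nonneg (hdeg v).le (hV i).le)]
      rw [Finset.sum_congr rfl fun v _ => hterm v, ← Finset.sum_filter]
      rw [show Finset.univ.filter (fun v => ψ v = i) = cls ψ i from rfl, ← Finset.sum_div]
      rw [show (∑ v ∈ cls ψ i, degH E v) = volH E (cls ψ i) from rfl, div_self (hV i).ne']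
      simp [Matrix.one_apply]
    · have hterm : ∀ v : Fin n,
          (if ψ v = i then Real.sqrt (degH E v / volH E (cls ψ i)) else 0) *
          (if ψ v = j then Real.sqrt (degH E v / volH E (cls ψ j)) else 0) = 0 := by
        intro v
        by_cases h : ψ v = i
        · have h' : ψ v ≠ j := fun hc => hij (h.symm.trans hc)
          simp [h']
        · simp [h]
      rw [Finset.sum_congr rfl fun v _ => hterm v]
      simp [Matrix.one_apply, hij]
  refine ⟨hXX, ?_⟩
  have hsplit : (Xhat E ψ)ᵀ * hLap E * Xhat E ψ
      = 1 - (Xhat E ψ)ᵀ * (dInvSqrt E * hAdj E * dInvSqrt E) * Xhat E ψ := by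
    rw [hLap, Matrix.mul_sub, Matrix.sub_mul, Matrix.mul_one, hXX]
  rw [hsplit, Matrix.trace, NHcut]
  simp only [Matrix.diag_apply, Matrix.sub_apply, Matrix.one_apply_eq, Finset.sum_sub_distrib]
  rw [Finset.sum_congr rfl fun j _ => boundary_div E hE (cls ψ j) (hV j)]
  rw [Finset.sum_sub_distrib]
  congr 1
  exact Finset.sum_congr rfl fun j _ => (diag_eq E hdeg hψ j).symm

end
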